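/- arXiv:1304.2429 — 2 statements merged into one kernel-verified Lean document; each statement's English description precedes it below -/
import Mathlib

section
/- Let T be a tree with t vertices and suppose a graph G has vertex set partitioned into parts V_1,...,V_t of equal size ν, with edges only between pairs (V_i,V_j) where (i,j) ∈ E(T). Suppose for each edge (i,j) of T, the bipartite graph between V_i and V_j contains a family of s pairwise edge-disjoint perfect matchings. Then G contains s pairwise edge-disjoint T-factors, covering in total s·ν·(t-1) edges. -/
open SimpleGraph

variable {V : Type*} {G : SimpleGraph V} {ν : ℕ}

def walkPerm (M : V → V → (Fin ν ≃ Fin ν)) : ∀ {u v : V}, G.Walk u v → (Fin ν ≃ Fin ν)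
  | _, _, .nil => Equiv.refl _
  | u, _, @Walk.cons _ _ _ x _ _ p => (M u x).trans (walkPerm M p)

theorem walkPerm_append (M : V → V → (Fin ν ≃ Fin ν)) {u v w : V} (p : G.Walk u v)
    (q : G.Walk v w) : walkPerm M (p.append q) = (walkPerm M p).trans (walkPerm M q) := by
  induction p with
  | nil => simp [walkPerm]
  | cons h p ih => simp [walkPerm, ih, Equiv.trans_assoc]

theorem walkPerm_concat (M : V → V → (Fin ν ≃ Fin ν)) {u v w : V} (p : G.Walk u v)
    (h : G.Adj v w) : walkPerm M (p.concat h) = (walkPerm M p).trans (M v w) := by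
  rw [Walk.concat_eq_append, walkPerm_append]
  simp [walkPerm]

/-- Let `T` be a tree on `[t]` and `G` a graph on `Fin t × Fin ν` (part `V_i` being
`{i} × Fin ν`) with edges only between parts corresponding to tree edges.  If for
every tree edge `(i,j)` the bipartite graph between `V_i` and `V_j` contains `s`
pairwise edge-disjoint perfect matchings, then `G` contains `s` pairwise
edge-disjoint `T`-factors, covering in total `s·ν·(t-1)` edges. -/
theorem stmt_2 (t ν s : ℕ) (hν : 0 < ν) (T : SimpleGraph (Fin t)) [DecidableRel T.Adj]
    (hT : T.IsTree)
    (G : SimpleGraph (Fin t × Fin ν))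
    (hbip : ∀ (i j : Fin t) (a b : Fin ν), G.Adj (i, a) (j, b) → T.Adj i j)
    (M : Fin t → Fin t → Fin s → (Fin ν ≃ Fin ν))
    (hsymm : ∀ (i j : Fin t) (k : Fin s), M j i k = (M i j k).symm)
    (hmatch : ∀ (i j : Fin t) (k : Fin s) (a : Fin ν),
      T.Adj i j → G.Adj (i, a) (j, M i j k a))
    (hdisj : ∀ (i j : Fin t) (k k' : Fin s) (a : Fin ν),
      T.Adj i j → k ≠ k' → M i j k a ≠ M i j k' a) :
    ∃ φ : Fin s → Fin ν → Fin t → Fin t × Fin ν,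
      (∀ k, Function.Bijective (fun p : Fin ν × Fin t => φ k p.1 p.2)) ∧
      (∀ (k : Fin s) (c : Fin ν) (i j : Fin t), T.Adj i j → G.Adj (φ k c i) (φ k c j)) ∧
      (∀ (k k' : Fin s) (c c' : Fin ν) (i j i' j' : Fin t), k ≠ k' →
        T.Adj i j → T.Adj i' j' →
        s(φ k c i, φ k c j) ≠ s(φ k' c' i', φ k' c' j')) ∧
      ((Finset.univ.filter
          (fun x : Fin s × Fin ν × Fin t × Fin t => T.Adj x.2.2.1 x.2.2.2)).image
          (fun x => s(φ x.1 x.2.1 x.2.2.1, φ x.1 x.2.1 x.2.2.2))).card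
        = s * ν * (t - 1) := by
  classical
  have hne : Nonempty (Fin t) := hT.isConnected.nonempty
  obtain ⟨r⟩ := hne
  set P : ∀ i : Fin t, T.Walk r i := fun i => (hT.existsUnique_path r i).choose with hPdef
  have hP : ∀ i, (P i).IsPath := fun i => (hT.existsUnique_path r i).choose_spec.1
  have hPu : ∀ i (q : T.Walk r i), q.IsPath → q = P i :=
    fun i q hq => (hT.existsUnique_path r i).choose_spec.2 q hq
  set ψ : Fin s → Fin t → (Fin ν ≃ Fin ν) :=
    fun k i => walkPerm (fun a b => M a b k) (P i) with hψdef
  have key : ∀ (k : Fin s) (i j : Fin t), T.Adj i j →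
      ∀ c, ψ k j c = M i j k (ψ k i c) := by
    intro k i j hij c
    by_cases hj : j ∈ (P i).support
    · have hq := (hP i).takeUntil hj
      have hr := (hP i).dropUntil hj
      have hedge : ((Walk.cons hij.symm Walk.nil : T.Walk j i)).IsPath := by
        simp [Walk.cons_isPath_iff, hij.ne']
      have he : ((P i).dropUntil j hj) = Walk.cons hij.symm Walk.nil :=
        (hT.existsUnique_path j i).unique hr hedge
      have hsplit := Walk.take_spec (P i) hj
      have htu : (P i).takeUntil j hj = P j := hPu j _ hq
      have : ψ k i = (ψ k j).trans ((fun a b => M a b k) j i) := by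
        rw [hψdef]
        dsimp only
        rw [← hsplit, he, walkPerm_append, htu]
        simp [walkPerm]
      have h2 : ψ k i c = (M i j k).symm (ψ k j c) := by
        rw [this]; simp [hsymm i j k]
      rw [h2, Equiv.apply_symm_apply]
    · have hcp : ((P i).concat hij).IsPath := by
        rw [← Walk.isPath_reverse_iff, Walk.reverse_concat]
        rw [Walk.cons_isPath_iff]
        exact ⟨(Walk.isPath_reverse_iff _).2 (hP i), by simpa using hj⟩
      have : (P i).concat hij = P j := hPu j _ hcp
      rw [hψdef]
      dsimp only
      rw [← this, walkPerm_concat]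
      simp
  refine ⟨fun k c i => (i, ψ k i c), ?_, ?_, ?_, ?_⟩
  · intro k
    exact (Equiv.mk (fun p : Fin ν × Fin t => ((p.2, ψ k p.2 p.1) : Fin t × Fin ν))
      (fun q => ((ψ k q.1).symm q.2, q.1))
      (fun p => by simp) (fun q => by simp)).bijective
  · intro k c i j hij
    have := hmatch i j k (ψ k i c) hij
    rwa [← key k i j hij c] at this
  all_goals {
    have main : ∀ (k k' : Fin s) (c c' : Fin ν) (i j i' j' : Fin t), T.Adj i j → T.Adj i' j' →
        s(((i, ψ k i c) : Fin t × Fin ν), (j, ψ k j c)) = s((i', ψ k' i' c'), (j', ψ k' j' c')) →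
        k = k' ∧ c = c' ∧ s(i, j) = s(i', j') := by
      intro k k' c c' i j i' j' hij hij' heq
      rw [Sym2.eq_iff] at heq
      rcases heq with ⟨h1, h2⟩ | ⟨h1, h2⟩
      · obtain ⟨hi, hx⟩ := Prod.mk.injEq .. ▸ h1
        obtain ⟨hjj, hy⟩ := Prod.mk.injEq .. ▸ h2
        subst hi hjj
        have hkk : k = k' := by
          by_contra hkk
          refine hdisj i j k k' (ψ k i c) hij hkk ?_
          calc M i j k (ψ k i c) = ψ k j c := (key k i j hij c).symm
            _ = ψ k' j c' := hy
            _ = M i j k' (ψ k' i c') := key k' i j hij c'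
            _ = M i j k' (ψ k i c) := by rw [hx]
        subst hkk
        have hcc : c = c' := (ψ k i).injective hx
        exact ⟨rfl, hcc, rfl⟩
      · obtain ⟨hi, hx⟩ := Prod.mk.injEq .. ▸ h1
        obtain ⟨hjj, hy⟩ := Prod.mk.injEq .. ▸ h2
        subst hi hjj
        -- now i = j', j = i' replaced: i' := j? careful
        -- h1 : (i, ψ k i c) = (j', ψ k' j' c'), so i = j'... subst direction
        have hkk : k = k' := by
          by_contra hkk
          refine hdisj i j k k' (ψ k i c) hij hkk ?_
          have e1 : ψ k j c = M i j k (ψ k i c) := key k i j hij c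
          have e2 : ψ k' i c' = M j i k' (ψ k' j c') := key k' j i hij.symm c'
          rw [← hx] at e2
          rw [hy] at e1
          rw [e1, hsymm i j k'] at e2
          have := congrArg (M i j k') e2
          simpa using this.symm
        subst hkk
        have hcc : c = c' := (ψ k i).injective hx
        exact ⟨rfl, hcc, Sym2.eq_swap⟩
    first
    | · intro k k' c c' i j i' j' hkk hij hij' heq
        exact hkk (main k k' c c' i j i' j' hij hij' heq).1
    | · have himg : ((Finset.univ.filter
            (fun x : Fin s × Fin ν × Fin t × Fin t => T.Adj x.2.2.1 x.2.2.2)).image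
            (fun x => s(((x.2.2.1, ψ x.1 x.2.2.1 x.2.1) : Fin t × Fin ν),
              (x.2.2.2, ψ x.1 x.2.2.2 x.2.1))))
          = ((Finset.univ : Finset (Fin s)) ×ˢ (Finset.univ : Finset (Fin ν)) ×ˢ
              T.edgeFinset).image
            (fun x : Fin s × Fin ν × Sym2 (Fin t) =>
              Sym2.map (fun i => ((i, ψ x.1 i x.2.1) : Fin t × Fin ν)) x.2.2) := by
          have hrep : ∀ e : Sym2 (Fin t), ∃ i j : Fin t, e = s(i, j) :=
            fun e => Sym2.ind (fun i j => ⟨i, j, rfl⟩) e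
          ext e
          simp only [Finset.mem_image, Finset.mem_filter, Finset.mem_univ, true_and,
            Finset.mem_product, mem_edgeFinset, mem_edgeSet]
          constructor
          · rintro ⟨⟨k, c, i, j⟩, hadj, rfl⟩
            refine ⟨(k, c, s(i, j)), ?_, ?_⟩
            · simpa using hadj
            · simp [Sym2.map_pair_eq]
          · rintro ⟨⟨k, c, e'⟩, hmem, rfl⟩
            obtain ⟨i, j, rfl⟩ := hrep e'
            refine ⟨(k, c, i, j), ?_, ?_⟩
            · simpa using hmem
            · simp [Sym2.map_pair_eq]
        rw [himg, Finset.card_image_of_injOn, Finset.card_product, Finset.card_product]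
        · have hec : T.edgeFinset.card + 1 = t := by
            simpa using hT.card_edgeFinset
          have hec' : T.edgeFinset.card = t - 1 := by omega
          simp only [Finset.card_univ, Fintype.card_fin, hec', mul_assoc]
        · have hrep : ∀ e : Sym2 (Fin t), ∃ i j : Fin t, e = s(i, j) :=
            fun e => Sym2.ind (fun i j => ⟨i, j, rfl⟩) e
          rintro ⟨k, c, e⟩ hx ⟨k', c', e'⟩ hy heq
          obtain ⟨i, j, rfl⟩ := hrep e
          obtain ⟨i', j', rfl⟩ := hrep e'
          simp only [Finset.mem_coe, Finset.mem_product, Finset.mem_univ, true_and,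
            mem_edgeFinset, mem_edgeSet] at hx hy
          simp only [Sym2.map_pair_eq] at heq
          have hadj : T.Adj i j := hx
          have hadj' : T.Adj i' j' := hy
          obtain ⟨hk, hc, he⟩ := main k k' c c' i j i' j' hadj hadj' heq
          simp [hk, hc, he]
  }
end

section
/- Let X be a real-valued random variable on the uniform probability space of permutations of n elements, and suppose there is a constant C such that |X(σ) - X(σ')| ≤ C whenever permutations σ and σ' differ by a single transposition. Then for every t > 0, P(|X - E[X]| ≥ t) ≤ 2·exp(-2t²/(C²n)). -/
open MeasureTheory Finset Real
open scoped ENNReal NNReal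

/-- Discrete measurable structure on the (finite) permutation group. -/
instance permMeasurableSpace (n : ℕ) : MeasurableSpace (Equiv.Perm (Fin n)) := ⊤


lemma mcd_Fpos (p : ℝ) (hp0 : 0 ≤ p) (hp1 : p ≤ 1) (u : ℝ) :
    0 ≤ p * u + u ^ 2 / 8 - Real.log (1 - p + p * Real.exp u) := by
  have hQ : ∀ v : ℝ, 0 < 1 - p + p * Real.exp v := by
    intro v
    rcases eq_or_lt_of_le hp0 with h | h
    · simp [← h]
    · nlinarith [Real.exp_pos v, Real.exp_pos v]
  set F : ℝ → ℝ := fun v => p * v + v ^ 2 / 8 - Real.log (1 - p + p * Real.exp v) with hF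
  set F' : ℝ → ℝ := fun v => p + v / 4 - p * Real.exp v / (1 - p + p * Real.exp v) with hF'
  have hQd : ∀ v : ℝ, HasDerivAt (fun w => 1 - p + p * Real.exp w) (p * Real.exp v) v := by
    intro v
    simpa using ((Real.hasDerivAt_exp v).const_mul p).const_add (1 - p)
  have hFd : ∀ v : ℝ, HasDerivAt F (F' v) v := by
    intro v
    have h1 : HasDerivAt (fun w : ℝ => p * w + w ^ 2 / 8) (p + v * 2 / 8) v := by
      have := ((hasDerivAt_id v).const_mul p).add
        (((hasDerivAt_pow 2 v)).div_const 8)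
      simp [mul_comm] at this
      exact this
    have h2 : HasDerivAt (fun w : ℝ => Real.log (1 - p + p * Real.exp w))
        (p * Real.exp v / (1 - p + p * Real.exp v)) v :=
      (hQd v).log (hQ v).ne'
    have := h1.sub h2
    exact this.congr_deriv (by simp only [hF']; ring)
  have hFd' : ∀ v : ℝ, HasDerivAt F'
      (1/4 - p * (1 - p) * Real.exp v / (1 - p + p * Real.exp v) ^ 2) v := by
    intro v
    have h2 : HasDerivAt (fun w : ℝ => p * Real.exp w / (1 - p + p * Real.exp w))
        ((p * Real.exp v * (1 - p + p * Real.exp v) - p * Real.exp v * (p * Real.exp v)) /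
          (1 - p + p * Real.exp v) ^ 2) v :=
      ((Real.hasDerivAt_exp v).const_mul p).div (hQd v) (hQ v).ne'
    have h1 : HasDerivAt (fun w : ℝ => p + w / 4) (1/4) v := by
      simpa using ((hasDerivAt_id v).div_const 4).const_add p
    have := h1.sub h2
    have hq := (hQ v).ne'
    exact this.congr_deriv (by ring)
  have hF''nonneg : ∀ v : ℝ, 0 ≤ 1/4 - p * (1 - p) * Real.exp v / (1 - p + p * Real.exp v) ^ 2 := by
    intro v
    rw [sub_nonneg, div_le_iff₀ (pow_pos (hQ v) 2)]
    nlinarith [Real.exp_pos v, sq_nonneg (1 - p - p * Real.exp v)]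
  have hmonoF' : Monotone F' := by
    apply monotone_of_deriv_nonneg
    · intro v; exact (hFd' v).differentiableAt
    · intro v; rw [(hFd' v).deriv]; exact hF''nonneg v
  have hF'0 : F' 0 = 0 := by
    simp only [hF']
    rw [Real.exp_zero]
    field_simp
    ring
  have hF0 : F 0 = 0 := by
    simp only [hF]
    rw [Real.exp_zero]
    norm_num
  have key : ∀ v : ℝ, 0 ≤ F v := by
    intro v
    rcases le_total 0 v with h | h
    · have : MonotoneOn F (Set.Ici (0:ℝ)) := by
        apply monotoneOn_of_deriv_nonneg (convex_Ici 0)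
        · exact Continuous.continuousOn (by
            have : ∀ w, DifferentiableAt ℝ F w := fun w => (hFd w).differentiableAt
            exact (Differentiable.continuous this))
        · intro w hw; exact (hFd w).differentiableAt.differentiableWithinAt
        · intro w hw
          rw [(hFd w).deriv]
          rw [interior_Ici] at hw
          calc (0:ℝ) = F' 0 := hF'0.symm
            _ ≤ F' w := hmonoF' (le_of_lt hw)
      have := this (Set.self_mem_Ici) (Set.mem_Ici.2 h) h
      linarith [hF0 ▸ this]
    · have : AntitoneOn F (Set.Iic (0:ℝ)) := by
        apply antitoneOn_of_deriv_nonpos (convex_Iic 0)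
        · exact Continuous.continuousOn (by
            have : ∀ w, DifferentiableAt ℝ F w := fun w => (hFd w).differentiableAt
            exact (Differentiable.continuous this))
        · intro w hw; exact (hFd w).differentiableAt.differentiableWithinAt
        · intro w hw
          rw [(hFd w).deriv]
          rw [interior_Iic] at hw
          calc F' w ≤ F' 0 := hmonoF' (le_of_lt hw)
            _ = 0 := hF'0
      have := this (Set.mem_Iic.2 h) (Set.self_mem_Iic) h
      linarith [hF0 ▸ this]
  exact key u

lemma mcd_core (p : ℝ) (hp0 : 0 ≤ p) (hp1 : p ≤ 1) (u : ℝ) :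
    (1 - p) * Real.exp (-p * u) + p * Real.exp ((1 - p) * u) ≤ Real.exp (u ^ 2 / 8) := by
  have hQ : 0 < 1 - p + p * Real.exp u := by
    rcases eq_or_lt_of_le hp0 with h | h
    · simp [← h]
    · nlinarith [Real.exp_pos u]
  have h1 : (1 - p) * Real.exp (-p * u) + p * Real.exp ((1 - p) * u)
      = Real.exp (-p * u) * (1 - p + p * Real.exp u) := by
    rw [show (1 - p) * u = -p * u + u by ring, Real.exp_add]
    ring
  rw [h1]
  have h2 := mcd_Fpos p hp0 hp1 u
  have h3 : Real.log (1 - p + p * Real.exp u) ≤ p * u + u ^ 2 / 8 := by linarith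
  have h4 : (1 - p + p * Real.exp u) ≤ Real.exp (p * u + u ^ 2 / 8) :=
    (Real.log_le_iff_le_exp hQ).1 h3
  calc Real.exp (-p * u) * (1 - p + p * Real.exp u)
      ≤ Real.exp (-p * u) * Real.exp (p * u + u ^ 2 / 8) := by
        exact mul_le_mul_of_nonneg_left h4 (Real.exp_pos _).le
    _ = Real.exp (u ^ 2 / 8) := by rw [← Real.exp_add]; ring_nf



lemma mcd_hoeffding {α : Type*} [DecidableEq α] (s : Finset α) (hs : s.Nonempty)
    (Y : α → ℝ) (hmean : ∑ x ∈ s, Y x = 0) (C l : ℝ) (hC : 0 < C)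
    (hdiff : ∀ x ∈ s, ∀ y ∈ s, Y x - Y y ≤ C) :
    ∑ x ∈ s, Real.exp (l * Y x) ≤ s.card * Real.exp (l ^ 2 * C ^ 2 / 8) := by
  obtain ⟨x₀, hx₀, hx₀min⟩ := s.exists_min_image Y hs
  set a : ℝ := Y x₀ with ha
  have hYa : ∀ x ∈ s, a ≤ Y x := fun x hx => hx₀min x hx
  have hYb : ∀ x ∈ s, Y x ≤ a + C := by
    intro x hx
    have := hdiff x hx x₀ hx₀
    linarith
  have hcard : (0:ℝ) < s.card := by exact_mod_cast card_pos.2 hs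
  have ha0 : a ≤ 0 := by
    by_contra h
    push_neg at h
    have : (0:ℝ) < ∑ x ∈ s, Y x := by
      calc (0:ℝ) < s.card * a := by positivity
        _ ≤ ∑ x ∈ s, Y x := by
            rw [card_eq_sum_ones s]
            push_cast
            rw [sum_mul]
            exact sum_le_sum (by intro x hx; simpa using hYa x hx)
    linarith [hmean]
  have hb0 : 0 ≤ a + C := by
    by_contra h
    push_neg at h
    have : ∑ x ∈ s, Y x < 0 := by
      calc ∑ x ∈ s, Y x ≤ s.card * (a + C) := by
            rw [card_eq_sum_ones s]; push_cast; rw [sum_mul]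
            exact sum_le_sum (by intro x hx; simpa using hYb x hx)
        _ < 0 := by
            apply mul_neg_of_pos_of_neg hcard h
    linarith [hmean]
  -- pointwise convexity bound
  have hpoint : ∀ x ∈ s, Real.exp (l * Y x)
      ≤ (a + C - Y x) / C * Real.exp (l * a) + (Y x - a) / C * Real.exp (l * (a + C)) := by
    intro x hx
    have hw1 : 0 ≤ (a + C - Y x) / C := by
      apply div_nonneg _ hC.le; linarith [hYb x hx]
    have hw2 : 0 ≤ (Y x - a) / C := by
      apply div_nonneg _ hC.le; linarith [hYa x hx]
    have hw : (a + C - Y x) / C + (Y x - a) / C = 1 := by field_simp; ring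
    have := convexOn_exp.2 (Set.mem_univ (l * a)) (Set.mem_univ (l * (a + C))) hw1 hw2 hw
    simp only [smul_eq_mul] at this
    have harg : (a + C - Y x) / C * (l * a) + (Y x - a) / C * (l * (a + C)) = l * Y x := by
      field_simp; ring
    rw [harg] at this
    exact this
  have hA : ∑ x ∈ s, (a + C - Y x) = s.card * (a + C) := by
    rw [sum_sub_distrib, hmean, sum_const, nsmul_eq_mul, sub_zero]
  have hB : ∑ x ∈ s, (Y x - a) = s.card * (-a) := by
    rw [sum_sub_distrib, hmean, sum_const, nsmul_eq_mul]
    ring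
  have hsum : ∑ x ∈ s, Real.exp (l * Y x)
      ≤ s.card * ((a + C) / C * Real.exp (l * a) + (-a) / C * Real.exp (l * (a + C))) := by
    calc ∑ x ∈ s, Real.exp (l * Y x)
        ≤ ∑ x ∈ s, ((a + C - Y x) / C * Real.exp (l * a) + (Y x - a) / C * Real.exp (l * (a + C)))
          := sum_le_sum hpoint
      _ = s.card * ((a + C) / C * Real.exp (l * a) + (-a) / C * Real.exp (l * (a + C))) := by
          rw [sum_add_distrib]
          have hh : ∀ c : ℝ, ∀ g : α → ℝ, (∑ x ∈ s, g x / C * c) = (∑ x ∈ s, g x) / C * c := by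
            intro c g; rw [← sum_mul, ← sum_div]
          rw [hh _ (fun x => a + C - Y x), hh _ (fun x => Y x - a), hA, hB]
          ring
  have hp0 : 0 ≤ -a / C := by apply div_nonneg _ hC.le; linarith
  have hp1 : -a / C ≤ 1 := by rw [div_le_one hC]; linarith
  have hkey := mcd_core (-a / C) hp0 hp1 (l * C)
  have e1 : -(-a / C) * (l * C) = l * a := by field_simp
  have e2 : (1 - -a / C) * (l * C) = l * (a + C) := by field_simp; ring
  have e3 : (1 - -a / C : ℝ) = (a + C) / C := by field_simp; ring
  have e4 : (l * C) ^ 2 / 8 = l ^ 2 * C ^ 2 / 8 := by ring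
  rw [e1, e2, e3, e4] at hkey
  calc ∑ x ∈ s, Real.exp (l * Y x)
      ≤ s.card * ((a + C) / C * Real.exp (l * a) + (-a) / C * Real.exp (l * (a + C))) := hsum
    _ ≤ s.card * Real.exp (l ^ 2 * C ^ 2 / 8) := by
        apply mul_le_mul_of_nonneg_left _ hcard.le
        calc (a + C) / C * rexp (l * a) + -a / C * rexp (l * (a + C))
            = (a + C) / C * rexp (l * a) + -a / C * rexp (l * (a + C)) := rfl
          _ ≤ rexp (l ^ 2 * C ^ 2 / 8) := hkey


variable {n : ℕ}

/-- The class of permutations agreeing with `σ` on indices `< k`. -/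
def mcdCls (n : ℕ) (k : ℕ) (σ : Equiv.Perm (Fin n)) : Finset (Equiv.Perm (Fin n)) :=
  univ.filter (fun τ => ∀ i : Fin n, (i : ℕ) < k → τ i = σ i)

lemma mcd_mem_cls {k : ℕ} {σ τ : Equiv.Perm (Fin n)} :
    τ ∈ mcdCls n k σ ↔ ∀ i : Fin n, (i : ℕ) < k → τ i = σ i := by
  simp [mcdCls]

lemma mcd_self_mem {k : ℕ} (σ : Equiv.Perm (Fin n)) : σ ∈ mcdCls n k σ :=
  mcd_mem_cls.2 (fun _ _ => rfl)

lemma mcd_cls_nonempty {k : ℕ} (σ : Equiv.Perm (Fin n)) : (mcdCls n k σ).Nonempty :=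
  ⟨σ, mcd_self_mem σ⟩

lemma mcd_cls_card_pos {k : ℕ} (σ : Equiv.Perm (Fin n)) : 0 < (mcdCls n k σ).card :=
  card_pos.2 (mcd_cls_nonempty σ)

lemma mcd_mem_symm {k : ℕ} {σ τ : Equiv.Perm (Fin n)} (h : τ ∈ mcdCls n k σ) :
    σ ∈ mcdCls n k τ :=
  mcd_mem_cls.2 (fun i hi => (mcd_mem_cls.1 h i hi).symm)

lemma mcd_mem_trans {k : ℕ} {σ τ ρ : Equiv.Perm (Fin n)} (h1 : τ ∈ mcdCls n k σ)
    (h2 : ρ ∈ mcdCls n k τ) : ρ ∈ mcdCls n k σ :=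
  mcd_mem_cls.2 (fun i hi => (mcd_mem_cls.1 h2 i hi).trans (mcd_mem_cls.1 h1 i hi))

lemma mcd_cls_mono {k m : ℕ} (hkm : k ≤ m) (σ : Equiv.Perm (Fin n)) :
    mcdCls n m σ ⊆ mcdCls n k σ := by
  intro τ hτ
  exact mcd_mem_cls.2 (fun i hi => mcd_mem_cls.1 hτ i (lt_of_lt_of_le hi hkm))

lemma mcd_cls_eq_of_mem {k : ℕ} {σ τ : Equiv.Perm (Fin n)} (h : τ ∈ mcdCls n k σ) :
    mcdCls n k τ = mcdCls n k σ := by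
  ext ρ
  exact ⟨fun hρ => mcd_mem_trans h hρ, fun hρ => mcd_mem_trans (mcd_mem_symm h) hρ⟩

lemma mcd_cls_zero (σ : Equiv.Perm (Fin n)) : mcdCls n 0 σ = univ := by
  ext τ; simp [mcd_mem_cls]

lemma mcd_cls_top (σ : Equiv.Perm (Fin n)) : mcdCls n n σ = {σ} := by
  ext τ
  simp only [mcd_mem_cls, Finset.mem_singleton]
  constructor
  · intro h; exact Equiv.ext (fun i => h i i.isLt)
  · intro h i _; rw [h]

/-- conditional average of `f` given the first `k` values. -/
noncomputable def mcdG (n k : ℕ) (f : Equiv.Perm (Fin n) → ℝ) (σ : Equiv.Perm (Fin n)) : ℝ :=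
  (∑ τ ∈ mcdCls n k σ, f τ) / (mcdCls n k σ).card

lemma mcdG_zero (f : Equiv.Perm (Fin n) → ℝ) (σ : Equiv.Perm (Fin n)) :
    mcdG n 0 f σ = (∑ τ, f τ) / (Fintype.card (Equiv.Perm (Fin n))) := by
  rw [mcdG, mcd_cls_zero]
  simp [Finset.card_univ]

lemma mcdG_top (f : Equiv.Perm (Fin n) → ℝ) (σ : Equiv.Perm (Fin n)) :
    mcdG n n f σ = f σ := by
  rw [mcdG, mcd_cls_top]
  simp

/-- Averaging identity: summing the conditional average over a closed set gives the plain sum. -/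
lemma mcd_avg (m : ℕ) (P : Finset (Equiv.Perm (Fin n))) (f : Equiv.Perm (Fin n) → ℝ)
    (hcl : ∀ τ ∈ P, mcdCls n m τ ⊆ P) :
    ∑ τ ∈ P, mcdG n m f τ = ∑ τ ∈ P, f τ := by
  have step1 : ∀ τ ∈ P, mcdG n m f τ
      = ∑ ρ ∈ P, if ρ ∈ mcdCls n m τ then f ρ / (mcdCls n m ρ).card else 0 := by
    intro τ hτ
    have h1 : mcdG n m f τ = ∑ ρ ∈ mcdCls n m τ, f ρ / (mcdCls n m ρ).card := by
      rw [mcdG, sum_div]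
      apply sum_congr rfl
      intro ρ hρ
      rw [mcd_cls_eq_of_mem hρ]
    have h2 : mcdCls n m τ = P.filter (fun ρ => ρ ∈ mcdCls n m τ) := by
      ext ρ
      simp only [Finset.mem_filter]
      exact ⟨fun hρ => ⟨hcl τ hτ hρ, hρ⟩, fun h => h.2⟩
    rw [h1]
    conv_lhs => rw [h2]
    rw [sum_filter]
  rw [sum_congr rfl step1, sum_comm]
  apply sum_congr rfl
  intro ρ hρ
  have h3 : ∀ τ ∈ P, (if ρ ∈ mcdCls n m τ then f ρ / ((mcdCls n m ρ).card : ℝ) else 0)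
      = if τ ∈ mcdCls n m ρ then f ρ / ((mcdCls n m ρ).card : ℝ) else 0 := by
    intro τ _
    by_cases hc : ρ ∈ mcdCls n m τ
    · rw [if_pos hc, if_pos (mcd_mem_symm hc)]
    · rw [if_neg hc, if_neg (fun h => hc (mcd_mem_symm h))]
  rw [sum_congr rfl h3, ← sum_filter]
  rw [show P.filter (fun τ => τ ∈ mcdCls n m ρ) = mcdCls n m ρ by
    ext τ
    simp only [Finset.mem_filter]
    exact ⟨fun h => h.2, fun h => ⟨hcl ρ hρ h, h⟩⟩]
  rw [sum_const, nsmul_eq_mul, mul_div_cancel₀]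
  exact_mod_cast (mcd_cls_card_pos ρ).ne'

section
variable (f : Equiv.Perm (Fin n) → ℝ) (C : ℝ)

/-- key bijection between classes with different value at position k -/
lemma mcd_bdd {k : ℕ} (hk : k < n)
    (hLip : ∀ (σ : Equiv.Perm (Fin n)) (i j : Fin n), |f σ - f (σ * Equiv.swap i j)| ≤ C)
    {σ τ : Equiv.Perm (Fin n)} (hτ : τ ∈ mcdCls n k σ) :
    |mcdG n (k+1) f σ - mcdG n (k+1) f τ| ≤ C := by
  set kk : Fin n := ⟨k, hk⟩ with hkk
  set a := σ kk with ha
  set b := τ kk with hb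
  set I : Equiv.Perm (Fin n) → Equiv.Perm (Fin n) := fun ρ => ρ * Equiv.swap kk (ρ⁻¹ b) with hI
  set J : Equiv.Perm (Fin n) → Equiv.Perm (Fin n) := fun ρ => ρ * Equiv.swap kk (ρ⁻¹ a) with hJ
  -- membership facts
  have hmem : ∀ (σ' : Equiv.Perm (Fin n)) (c : Fin n), σ' kk = c →
      ∀ ρ ∈ mcdCls n (k+1) σ', ρ kk = c := by
    intro σ' c hc ρ hρ
    rw [mcd_mem_cls] at hρ
    rw [hρ kk (Nat.lt_succ_self k), hc]
  have hIJmem : ∀ (σ' τ' : Equiv.Perm (Fin n)), τ' ∈ mcdCls n k σ' →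
      ∀ ρ ∈ mcdCls n (k+1) σ', ρ * Equiv.swap kk (ρ⁻¹ (τ' kk)) ∈ mcdCls n (k+1) τ' := by
    intro σ' τ' hττ ρ hρ
    rw [mcd_mem_cls] at hρ ⊢
    intro i hi
    rcases Nat.lt_succ_iff_lt_or_eq.1 hi with hik | hik
    · -- i < k
      have hne1 : i ≠ kk := by
        intro h; rw [h] at hik; exact absurd hik (lt_irrefl k)
      have hne2 : i ≠ ρ⁻¹ (τ' kk) := by
        intro h
        have : ρ i = τ' kk := by rw [h]; exact Equiv.apply_symm_apply ρ _
        have h2 : ρ i = τ' i := by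
          rw [hρ i hi]
          exact (mcd_mem_cls.1 hττ i hik).symm
        have h3 : τ' i = τ' kk := by rw [← h2, this]
        have := τ'.injective h3
        exact hne1 this
      rw [Equiv.Perm.mul_apply, Equiv.swap_apply_of_ne_of_ne hne1 hne2]
      rw [hρ i hi]
      exact (mcd_mem_cls.1 hττ i hik).symm
    · -- i = kk
      have : i = kk := Fin.ext (by simpa using hik)
      rw [this, Equiv.Perm.mul_apply, Equiv.swap_apply_left, show ρ (ρ⁻¹ (τ' kk)) = τ' kk from Equiv.apply_symm_apply ρ _]
  have hImem : ∀ ρ ∈ mcdCls n (k+1) σ, I ρ ∈ mcdCls n (k+1) τ := fun ρ hρ => hIJmem σ τ hτ ρ hρ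
  have hJmem : ∀ ρ ∈ mcdCls n (k+1) τ, J ρ ∈ mcdCls n (k+1) σ := by
    intro ρ hρ
    have hστ : σ ∈ mcdCls n k τ := by
      rw [mcd_mem_cls] at hτ ⊢
      intro i hi; exact (hτ i hi).symm
    exact hIJmem τ σ hστ ρ hρ
  have hJI : ∀ ρ ∈ mcdCls n (k+1) σ, J (I ρ) = ρ := by
    intro ρ hρ
    have hρa : ρ kk = a := hmem σ a rfl ρ hρ
    have h1 : (I ρ)⁻¹ a = ρ⁻¹ b := by
      rw [hI]
      simp only [mul_inv_rev, Equiv.Perm.mul_apply, Equiv.swap_inv]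
      rw [show ρ⁻¹ a = kk from by rw [← hρa]; exact Equiv.symm_apply_apply ρ _]
      exact Equiv.swap_apply_left _ _
    rw [hJ]
    simp only [hI] at h1
    simp only [hI, h1]
    rw [mul_assoc, Equiv.swap_mul_self, mul_one]
  have hIJ : ∀ ρ ∈ mcdCls n (k+1) τ, I (J ρ) = ρ := by
    intro ρ hρ
    have hρb : ρ kk = b := hmem τ b rfl ρ hρ
    have h1 : (J ρ)⁻¹ b = ρ⁻¹ a := by
      rw [hJ]
      simp only [mul_inv_rev, Equiv.Perm.mul_apply, Equiv.swap_inv]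
      rw [show ρ⁻¹ b = kk from by rw [← hρb]; exact Equiv.symm_apply_apply ρ _]
      exact Equiv.swap_apply_left _ _
    rw [hI]
    simp only [hJ] at h1
    simp only [hJ, h1]
    rw [mul_assoc, Equiv.swap_mul_self, mul_one]
  have hcard : (mcdCls n (k+1) σ).card = (mcdCls n (k+1) τ).card :=
    Finset.card_nbij' I J hImem hJmem hJI hIJ
  have hsum : ∑ ρ' ∈ mcdCls n (k+1) τ, f ρ' = ∑ ρ ∈ mcdCls n (k+1) σ, f (I ρ) :=
    (Finset.sum_nbij' I J hImem hJmem hJI hIJ (fun ρ _ => rfl)).symm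
  rw [mcdG, mcdG, ← hcard, div_sub_div_same, hsum, ← sum_sub_distrib]
  rw [abs_div, abs_of_nonneg (by positivity : (0:ℝ) ≤ ((mcdCls n (k+1) σ).card : ℝ))]
  rw [div_le_iff₀ (by exact_mod_cast mcd_cls_card_pos σ)]
  calc |∑ ρ ∈ mcdCls n (k+1) σ, (f ρ - f (I ρ))|
      ≤ ∑ ρ ∈ mcdCls n (k+1) σ, |f ρ - f (I ρ)| := Finset.abs_sum_le_sum_abs _ _
    _ ≤ ∑ _ρ ∈ mcdCls n (k+1) σ, C := sum_le_sum (fun ρ _ => hLip ρ kk (ρ⁻¹ b))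
    _ = C * (mcdCls n (k+1) σ).card := by rw [sum_const, nsmul_eq_mul]; ring
end

section
variable (f : Equiv.Perm (Fin n) → ℝ) (C : ℝ) (hC : 0 < C)
  (hLip : ∀ (σ : Equiv.Perm (Fin n)) (i j : Fin n), |f σ - f (σ * Equiv.swap i j)| ≤ C)

lemma mcd_cls_closed (k : ℕ) (σ : Equiv.Perm (Fin n)) :
    ∀ τ ∈ mcdCls n k σ, mcdCls n (k+1) τ ⊆ mcdCls n k σ := by
  intro τ hτ
  refine subset_trans (mcd_cls_mono (Nat.le_succ k) τ) ?_
  rw [mcd_cls_eq_of_mem hτ]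

include hC hLip in
lemma mcd_step {k : ℕ} (hk : k < n) (l : ℝ) :
    ∑ σ, Real.exp (l * mcdG n (k+1) f σ)
      ≤ (∑ σ, Real.exp (l * mcdG n k f σ)) * Real.exp (l ^ 2 * C ^ 2 / 8) := by
  have havg := mcd_avg k Finset.univ (fun σ => Real.exp (l * mcdG n (k+1) f σ))
    (fun τ _ => Finset.subset_univ _)
  rw [← havg, Finset.sum_mul]
  apply Finset.sum_le_sum
  intro σ _
  -- bound the class average at σ
  set s := mcdCls n k σ with hs
  have hcardpos : (0:ℝ) < (s.card : ℝ) := by exact_mod_cast mcd_cls_card_pos σ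
  have hgk : mcdG n k f σ = (∑ τ ∈ s, f τ) / s.card := rfl
  have hmean : ∑ τ ∈ s, (mcdG n (k+1) f τ - mcdG n k f σ) = 0 := by
    rw [Finset.sum_sub_distrib, mcd_avg (k+1) s f (mcd_cls_closed k σ), Finset.sum_const,
      nsmul_eq_mul, hgk, mul_div_cancel₀ _ hcardpos.ne']
    ring
  have hdiff : ∀ x ∈ s, ∀ y ∈ s,
      (mcdG n (k+1) f x - mcdG n k f σ) - (mcdG n (k+1) f y - mcdG n k f σ) ≤ C := by
    intro x hx y hy
    have hyx : y ∈ mcdCls n k x := mcd_mem_trans (mcd_mem_symm hx) hy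
    have := (abs_le.1 (mcd_bdd f C hk hLip hyx)).2
    linarith
  have hhoef := mcd_hoeffding s (mcd_cls_nonempty σ) _ hmean C l hC hdiff
  have hexp : ∀ τ ∈ s, Real.exp (l * mcdG n (k+1) f τ)
      = Real.exp (l * (mcdG n (k+1) f τ - mcdG n k f σ)) * Real.exp (l * mcdG n k f σ) := by
    intro τ _
    rw [← Real.exp_add]
    ring_nf
  have hsum : ∑ τ ∈ s, Real.exp (l * mcdG n (k+1) f τ)
      ≤ s.card * Real.exp (l ^ 2 * C ^ 2 / 8) * Real.exp (l * mcdG n k f σ) := by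
    rw [Finset.sum_congr rfl hexp, ← Finset.sum_mul]
    exact mul_le_mul_of_nonneg_right hhoef (Real.exp_pos _).le
  rw [mcdG]
  rw [div_le_iff₀ hcardpos]
  calc ∑ τ ∈ s, Real.exp (l * mcdG n (k+1) f τ)
      ≤ s.card * Real.exp (l ^ 2 * C ^ 2 / 8) * Real.exp (l * mcdG n k f σ) := hsum
    _ = Real.exp (l * mcdG n k f σ) * Real.exp (l ^ 2 * C ^ 2 / 8) * s.card := by ring

include hC hLip in
lemma mcd_mgf (l : ℝ) :
    ∑ σ, Real.exp (l * f σ)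
      ≤ (Fintype.card (Equiv.Perm (Fin n))) *
        Real.exp (l * ((∑ τ, f τ) / (Fintype.card (Equiv.Perm (Fin n)))))
        * Real.exp (l ^ 2 * C ^ 2 * n / 8) := by
  set N : ℝ := (Fintype.card (Equiv.Perm (Fin n)) : ℝ)
  set E : ℝ := (∑ τ, f τ) / N
  have key : ∀ k, k ≤ n → ∑ σ, Real.exp (l * mcdG n k f σ)
      ≤ N * Real.exp (l * E) * Real.exp (l ^ 2 * C ^ 2 * k / 8) := by
    intro k
    induction k with
    | zero =>
      intro _
      have : ∀ σ : Equiv.Perm (Fin n), Real.exp (l * mcdG n 0 f σ) = Real.exp (l * E) := by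
        intro σ; rw [mcdG_zero]
      rw [Finset.sum_congr rfl (fun σ _ => this σ), Finset.sum_const, nsmul_eq_mul,
        Finset.card_univ]
      simp only [Nat.cast_zero, mul_zero, zero_div, Real.exp_zero]
      ring_nf
      exact le_of_eq (mul_comm _ _)
    | succ k ih =>
      intro hk1
      have hk : k < n := hk1
      calc ∑ σ, Real.exp (l * mcdG n (k+1) f σ)
          ≤ (∑ σ, Real.exp (l * mcdG n k f σ)) * Real.exp (l ^ 2 * C ^ 2 / 8) :=
            mcd_step f C hC hLip hk l
        _ ≤ (N * Real.exp (l * E) * Real.exp (l ^ 2 * C ^ 2 * k / 8)) *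
              Real.exp (l ^ 2 * C ^ 2 / 8) := by
            apply mul_le_mul_of_nonneg_right (ih hk.le) (Real.exp_pos _).le
        _ = N * Real.exp (l * E) * Real.exp (l ^ 2 * C ^ 2 * ((k+1 : ℕ) : ℝ) / 8) := by
            have harg : l ^ 2 * C ^ 2 * ((k+1 : ℕ) : ℝ) / 8
                = l ^ 2 * C ^ 2 * (k:ℝ) / 8 + l ^ 2 * C ^ 2 / 8 := by push_cast; ring
            rw [harg, Real.exp_add]
            ring
  have := key n le_rfl
  rw [Finset.sum_congr rfl (fun σ _ => by rw [mcdG_top f σ])] at this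
  exact this

include hC hLip in
lemma mcd_tail (hn : 0 < n) (t : ℝ) (ht : 0 < t) :
    ((Finset.univ.filter (fun σ : Equiv.Perm (Fin n) =>
        t ≤ f σ - (∑ τ, f τ) / (Fintype.card (Equiv.Perm (Fin n))))).card : ℝ)
      ≤ (Fintype.card (Equiv.Perm (Fin n))) * Real.exp (-2 * t ^ 2 / (C ^ 2 * n)) := by
  set N : ℝ := (Fintype.card (Equiv.Perm (Fin n)) : ℝ)
  set E : ℝ := (∑ τ, f τ) / N
  set l : ℝ := 4 * t / (C ^ 2 * n) with hl
  have hnR : (0:ℝ) < (n:ℝ) := by exact_mod_cast hn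
  have hlpos : 0 < l := by positivity
  set S := Finset.univ.filter (fun σ : Equiv.Perm (Fin n) => t ≤ f σ - E) with hS
  have h1 : (S.card : ℝ) * Real.exp (l * (E + t)) ≤ ∑ σ ∈ S, Real.exp (l * f σ) := by
    rw [Finset.card_eq_sum_ones S]
    push_cast
    rw [Finset.sum_mul]
    apply Finset.sum_le_sum
    intro σ hσ
    rw [one_mul]
    apply Real.exp_le_exp.2
    have := (Finset.mem_filter.1 hσ).2
    have : E + t ≤ f σ := by linarith
    nlinarith
  have h2 : ∑ σ ∈ S, Real.exp (l * f σ) ≤ ∑ σ, Real.exp (l * f σ) :=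
    Finset.sum_le_sum_of_subset_of_nonneg (Finset.subset_univ S)
      (fun σ _ _ => (Real.exp_pos _).le)
  have h3 := mcd_mgf f C hC hLip l
  have h4 : (S.card : ℝ) * Real.exp (l * (E + t))
      ≤ N * Real.exp (l * E) * Real.exp (l ^ 2 * C ^ 2 * n / 8) := by
    calc (S.card : ℝ) * Real.exp (l * (E + t)) ≤ ∑ σ ∈ S, Real.exp (l * f σ) := h1
      _ ≤ ∑ σ, Real.exp (l * f σ) := h2
      _ ≤ N * Real.exp (l * E) * Real.exp (l ^ 2 * C ^ 2 * n / 8) := h3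
  have h5 : (S.card : ℝ) ≤ N * Real.exp (l * E) * Real.exp (l ^ 2 * C ^ 2 * n / 8)
      / Real.exp (l * (E + t)) := by
    rw [le_div_iff₀ (Real.exp_pos _)]
    exact h4
  have h6 : N * Real.exp (l * E) * Real.exp (l ^ 2 * C ^ 2 * n / 8) / Real.exp (l * (E + t))
      = N * Real.exp (-2 * t ^ 2 / (C ^ 2 * n)) := by
    rw [mul_assoc, mul_div_assoc, ← Real.exp_add, ← Real.exp_sub]
    congr 2
    rw [hl]
    field_simp
    ring
  rw [h6] at h5
  exact h5
end

instance (n : ℕ) : MeasurableSingletonClass (Equiv.Perm (Fin n)) :=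
  ⟨fun _ => MeasurableSpace.measurableSet_top⟩

/-- McDiarmid's bounded-differences inequality on the uniform space of permutations
of `n` elements: if `|X(σ) - X(σ')| ≤ C` whenever `σ, σ'` differ by a single
transposition, then `P(|X - E[X]| ≥ t) ≤ 2·exp(-2t²/(C²n))`. -/
theorem stmt_4 (n : ℕ) (hn : 0 < n) (X : Equiv.Perm (Fin n) → ℝ) (C : ℝ) (hC : 0 < C)
    (hLip : ∀ (σ : Equiv.Perm (Fin n)) (i j : Fin n),
      |X σ - X (σ * Equiv.swap i j)| ≤ C)
    (t : ℝ) (ht : 0 < t) :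
    (PMF.uniformOfFintype (Equiv.Perm (Fin n))).toMeasure
        {σ | t ≤ |X σ - ∫ σ', X σ' ∂(PMF.uniformOfFintype (Equiv.Perm (Fin n))).toMeasure|}
      ≤ ENNReal.ofReal (2 * Real.exp (-2 * t ^ 2 / (C ^ 2 * n))) := by
  classical
  set N : ℕ := Fintype.card (Equiv.Perm (Fin n)) with hN
  set p : PMF (Equiv.Perm (Fin n)) := PMF.uniformOfFintype (Equiv.Perm (Fin n)) with hp
  set E : ℝ := (∑ τ, X τ) / N with hE
  have hNpos : 0 < N := Fintype.card_pos
  have hNR : (0:ℝ) < (N:ℝ) := by exact_mod_cast hNpos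
  -- the integral is the average
  have hint : ∫ σ', X σ' ∂p.toMeasure = E := by
    rw [PMF.integral_eq_sum]
    have : ∀ σ : Equiv.Perm (Fin n), (p σ).toReal • X σ = X σ / N := by
      intro σ
      rw [hp, PMF.uniformOfFintype_apply]
      rw [smul_eq_mul]
      rw [ENNReal.toReal_inv, ENNReal.toReal_natCast]
      rw [div_eq_inv_mul]
    rw [Finset.sum_congr rfl (fun σ _ => this σ), ← Finset.sum_div]
  rw [hint]
  -- measure as a sum
  set e : ℝ := Real.exp (-2 * t ^ 2 / (C ^ 2 * n)) with he
  have hepos : 0 < e := Real.exp_pos _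
  set s : Set (Equiv.Perm (Fin n)) := {σ | t ≤ |X σ - E|} with hs
  have hmeas : p.toMeasure s = ∑ σ, s.indicator (fun σ => p σ) σ :=
    PMF.toMeasure_apply_fintype p s
  have hindic : ∀ σ, s.indicator (fun σ => p σ) σ
      = if σ ∈ s then ((N : ℝ≥0∞))⁻¹ else 0 := by
    intro σ
    rw [Set.indicator_apply]
    by_cases h : σ ∈ s
    · rw [if_pos h, if_pos h, hp, PMF.uniformOfFintype_apply]
    · rw [if_neg h, if_neg h]
  set S₁ := Finset.univ.filter (fun σ : Equiv.Perm (Fin n) => t ≤ X σ - E) with hS₁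
  set S₂ := Finset.univ.filter (fun σ : Equiv.Perm (Fin n) => t ≤ (-X σ) - (-E)) with hS₂
  have hsplit : ∀ σ : Equiv.Perm (Fin n),
      (if σ ∈ s then ((N : ℝ≥0∞))⁻¹ else 0)
        ≤ (if t ≤ X σ - E then ((N : ℝ≥0∞))⁻¹ else 0)
          + (if t ≤ (-X σ) - (-E) then ((N : ℝ≥0∞))⁻¹ else 0) := by
    intro σ
    by_cases h : σ ∈ s
    · rw [if_pos h]
      have : t ≤ |X σ - E| := h
      rcases le_abs.1 this with h1 | h1
      · rw [if_pos h1]; exact le_add_of_nonneg_right zero_le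
      · rw [if_pos (by linarith : t ≤ (-X σ) - (-E))]
        exact le_add_of_nonneg_left zero_le
    · rw [if_neg h]; exact zero_le
  have hcount : ∀ (P : Equiv.Perm (Fin n) → Prop) [DecidablePred P],
      ∑ σ, (if P σ then ((N : ℝ≥0∞))⁻¹ else 0)
        = ((Finset.univ.filter P).card : ℝ≥0∞) * ((N : ℝ≥0∞))⁻¹ := by
    intro P _
    rw [← Finset.sum_filter, Finset.sum_const, nsmul_eq_mul]
  have hbound : ∀ (c : ℕ), (c : ℝ) ≤ (N:ℝ) * e →
      (c : ℝ≥0∞) * ((N : ℝ≥0∞))⁻¹ ≤ ENNReal.ofReal e := by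
    intro c hc
    rw [← div_eq_mul_inv, ENNReal.div_le_iff (by exact_mod_cast hNpos.ne') (by simp)]
    calc (c : ℝ≥0∞) = ENNReal.ofReal (c : ℝ) := by rw [ENNReal.ofReal_natCast]
      _ ≤ ENNReal.ofReal ((N:ℝ) * e) := ENNReal.ofReal_le_ofReal hc
      _ = ENNReal.ofReal e * (N : ℝ≥0∞) := by
          rw [mul_comm, ENNReal.ofReal_mul hepos.le, ENNReal.ofReal_natCast]
  -- the two tail bounds
  have htail1 : ((S₁.card : ℕ) : ℝ) ≤ (N:ℝ) * e := mcd_tail X C hC hLip hn t ht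
  have htail2 : ((S₂.card : ℕ) : ℝ) ≤ (N:ℝ) * e := by
    have hLip' : ∀ (σ : Equiv.Perm (Fin n)) (i j : Fin n),
        |(-X σ) - (-X (σ * Equiv.swap i j))| ≤ C := by
      intro σ i j
      rw [show (-X σ) - (-X (σ * Equiv.swap i j)) = -(X σ - X (σ * Equiv.swap i j)) by ring,
        abs_neg]
      exact hLip σ i j
    have := mcd_tail (fun σ => -X σ) C hC hLip' hn t ht
    have heq : (∑ τ, -X τ) / (N:ℝ) = -E := by rw [Finset.sum_neg_distrib, neg_div]
    rw [heq] at this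
    exact this
  calc p.toMeasure s = ∑ σ, (if σ ∈ s then ((N : ℝ≥0∞))⁻¹ else 0) := by
        rw [hmeas, Finset.sum_congr rfl (fun σ _ => hindic σ)]
    _ ≤ ∑ σ, ((if t ≤ X σ - E then ((N : ℝ≥0∞))⁻¹ else 0)
          + (if t ≤ (-X σ) - (-E) then ((N : ℝ≥0∞))⁻¹ else 0)) :=
        Finset.sum_le_sum (fun σ _ => hsplit σ)
    _ = (S₁.card : ℝ≥0∞) * ((N : ℝ≥0∞))⁻¹ + (S₂.card : ℝ≥0∞) * ((N : ℝ≥0∞))⁻¹ := by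
        rw [Finset.sum_add_distrib, hcount (fun σ => t ≤ X σ - E),
          hcount (fun σ => t ≤ (-X σ) - (-E))]
    _ ≤ ENNReal.ofReal e + ENNReal.ofReal e :=
        add_le_add (hbound S₁.card htail1) (hbound S₂.card htail2)
    _ = ENNReal.ofReal (2 * e) := by
        rw [← ENNReal.ofReal_add hepos.le hepos.le]; ring_nf
end
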